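/- For any density operator σ on ℂ²⊗ℂ² with second partial trace Tr_Y(σ) = (1/2)I, and v = cos(π/8)|00⟩ + sin(π/8)|11⟩, it holds that ⟨vv*, σ⟩ ≤ cos²(π/8). -/

import Mathlib

open Matrix
open scoped Kronecker ComplexOrder

noncomputable section

/-- `Φ ⊗ id` : apply a linear map `Φ` on `L(X)` to the first tensor factor of `L(X ⊗ Z)`. -/
def lmapTensorId {n m k : Type*} [Fintype n] [Fintype k]
    (Φ : Matrix n n ℂ →ₗ[ℂ] Matrix m m ℂ)
    (M : Matrix (n × k) (n × k) ℂ) : Matrix (m × k) (m × k) ℂ :=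
  fun p q => Φ (fun i j => M (i, p.2) (j, q.2)) p.1 q.1

/-- `id ⊗ Ψ` : apply a linear map `Ψ` on `L(Z)` to the second tensor factor of `L(Y ⊗ Z)`. -/
def idTensorLmap {n k l : Type*} [Fintype n] [Fintype k]
    (Ψ : Matrix k k ℂ →ₗ[ℂ] Matrix l l ℂ)
    (M : Matrix (n × k) (n × k) ℂ) : Matrix (n × l) (n × l) ℂ :=
  fun p q => Ψ (fun a b => M (p.1, a) (q.1, b)) p.2 q.2

/-- Complete positivity: `Φ ⊗ id_k` maps positive semidefinite operators to positive
semidefinite operators for every finite-dimensional ancilla `k`. -/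
def IsCompletelyPositive {n m : Type*} [Fintype n] [Fintype m]
    (Φ : Matrix n n ℂ →ₗ[ℂ] Matrix m m ℂ) : Prop :=
  ∀ (k : Type) [Fintype k] [DecidableEq k],
    ∀ M : Matrix (n × k) (n × k) ℂ, M.PosSemidef → (lmapTensorId Φ M).PosSemidef

def IsTracePreserving {n m : Type*} [Fintype n] [Fintype m]
    (Φ : Matrix n n ℂ →ₗ[ℂ] Matrix m m ℂ) : Prop :=
  ∀ M : Matrix n n ℂ, (Φ M).trace = M.trace

/-- Partial trace over the first tensor factor. -/
def trFst {n k : Type*} [Fintype n] (M : Matrix (n × k) (n × k) ℂ) : Matrix k k ℂ :=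
  fun a b => ∑ i : n, M (i, a) (i, b)

/-- Partial trace over the second tensor factor. -/
def trSnd {n k : Type*} [Fintype k] (M : Matrix (n × k) (n × k) ℂ) : Matrix n n ℂ :=
  fun i j => ∑ a : k, M (i, a) (j, a)

/-- Hilbert-Schmidt inner product `⟨A, B⟩ = Tr(A* B)`. -/
def minner {n : Type*} [Fintype n] (A B : Matrix n n ℂ) : ℂ := (Aᴴ * B).trace

/-- The square root of a positive semidefinite matrix, as defined in Mathlib (Dec 2024),
since removed from Mathlib. -/
def Matrix.PosSemidef.sqrt {𝕜 : Type*} [RCLike 𝕜] {n : Type*} [Fintype n] [DecidableEq n]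
    {A : Matrix n n 𝕜} (hA : A.PosSemidef) : Matrix n n 𝕜 :=
  (hA.1.eigenvectorUnitary : Matrix n n 𝕜) *
    diagonal ((RCLike.ofReal : ℝ → 𝕜) ∘ (√·) ∘ hA.1.eigenvalues) *
    (star hA.1.eigenvectorUnitary : Matrix n n 𝕜)

open Classical in
/-- Square root of a positive semidefinite matrix (junk value `0` otherwise). -/
def msqrt {n : Type*} [Fintype n] [DecidableEq n] (M : Matrix n n ℂ) : Matrix n n ℂ :=
  if h : M.PosSemidef then h.sqrt else 0

/-- Trace norm `‖M‖₁ = Tr √(M* M)`. -/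
def traceNorm {n : Type*} [Fintype n] [DecidableEq n] (M : Matrix n n ℂ) : ℝ :=
  ((Matrix.posSemidef_conjTranspose_mul_self M).sqrt.trace).re

/-- Fidelity `F(Q, R) = ‖√Q √R‖₁` of positive semidefinite matrices. -/
def fid {n : Type*} [Fintype n] [DecidableEq n] (Q R : Matrix n n ℂ) : ℝ :=
  traceNorm (msqrt Q * msqrt R)

/-- Choi-Jamiolkowski operator `J(Φ) = Σ_{i,j} Φ(|i⟩⟨j|) ⊗ |i⟩⟨j|`. -/
def choi {n m : Type*} [Fintype n] [DecidableEq n] [Fintype m]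
    (Φ : Matrix n n ℂ →ₗ[ℂ] Matrix m m ℂ) : Matrix (m × n) (m × n) ℂ :=
  fun p q => Φ (Matrix.single p.2 q.2 1) p.1 q.1

/-- Tensor product of vectors. -/
def tensorVec {α β : Type*} (v : α → ℂ) (w : β → ℂ) : α × β → ℂ := fun p => v p.1 * w p.2

/-- `u = (|00⟩ + |11⟩)/√2`. -/
def uVec : Fin 2 × Fin 2 → ℂ := fun p =>
  if p = (0, 0) then (Real.sqrt 2 : ℂ)⁻¹ else if p = (1, 1) then (Real.sqrt 2 : ℂ)⁻¹ else 0

/-- `v = cos(π/8)|00⟩ + sin(π/8)|11⟩`. -/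
def vVec : Fin 2 × Fin 2 → ℂ := fun p =>
  if p = (0, 0) then (Real.cos (Real.pi / 8) : ℂ)
  else if p = (1, 1) then (Real.sin (Real.pi / 8) : ℂ) else 0

/-- `w = -sin(π/8)|00⟩ + cos(π/8)|11⟩`. -/
def wVec : Fin 2 × Fin 2 → ℂ := fun p =>
  if p = (0, 0) then -(Real.sin (Real.pi / 8) : ℂ)
  else if p = (1, 1) then (Real.cos (Real.pi / 8) : ℂ) else 0


/-- Any density operator `σ` on `ℂ² ⊗ ℂ²` with `Tr_Y(σ) = (1/2)·1` satisfies
`⟨vv*, σ⟩ ≤ cos²(π/8)` for `v = cos(π/8)|00⟩ + sin(π/8)|11⟩`. -/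
theorem stmt6 (σ : Matrix (Fin 2 × Fin 2) (Fin 2 × Fin 2) ℂ)
    (hσ : σ.PosSemidef) (hσtr : σ.trace = 1)
    (hpt : trFst σ = ((1 / 2 : ℝ) : ℂ) • (1 : Matrix (Fin 2) (Fin 2) ℂ)) :
    (minner (vecMulVec vVec (star vVec)) σ).re ≤ Real.cos (Real.pi / 8) ^ 2 := by
  set c := Real.cos (Real.pi / 8) with hc
  set s := Real.sin (Real.pi / 8) with hs
  have key : (minner (vecMulVec vVec (star vVec)) σ).re =
      c^2 * (σ (0,0) (0,0)).re + s^2 * (σ (1,1) (1,1)).re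
      + c*s*(σ (0,0) (1,1)).re + c*s*(σ (1,1) (0,0)).re := by
    simp [minner, Matrix.trace, Matrix.mul_apply, vecMulVec_apply, vVec,
      Fintype.sum_prod_type, Fin.sum_univ_two, Matrix.diag, -Real.cos_pi_div_eight,
      -Real.sin_pi_div_eight, -Complex.ofReal_cos, -Complex.ofReal_sin]
    ring
  have p00 : ((0,0) : Fin 2 × Fin 2) = 0 := rfl
  have p11 : ((1,1) : Fin 2 × Fin 2) = 1 := rfl
  rw [p00, p11] at key
  -- diagonal entries nonneg
  have diag : ∀ p, 0 ≤ (σ p p).re := by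
    intro p
    have h := hσ.dotProduct_mulVec_nonneg (Pi.single p 1)
    rw [Complex.le_def] at h
    simpa [dotProduct, mulVec, Pi.single_apply] using h.1
  -- cross term bound
  have cross : (σ 0 1).re + (σ 1 0).re ≤ (σ 0 0).re + (σ 1 1).re := by
    have h := hσ.dotProduct_mulVec_nonneg (Pi.single ((0:Fin 2),(0:Fin 2)) 1 - Pi.single (1,1) 1)
    rw [Complex.le_def] at h
    have := h.1
    simp [dotProduct, mulVec, Pi.single_apply, Fintype.sum_prod_type,
      Fin.sum_univ_two, mul_sub, sub_mul] at this
    rw [p00, p11] at this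
    linarith
  -- partial trace entries
  have e0 : (σ (0,0) (0,0)).re + (σ (1,0) (1,0)).re = 1/2 := by
    have h := congrFun (congrFun hpt 0) 0
    simp [trFst, Fin.sum_univ_two, Matrix.one_apply] at h
    have := congrArg Complex.re h
    simpa using this
  have e1 : (σ (0,1) (0,1)).re + (σ (1,1) (1,1)).re = 1/2 := by
    have h := congrFun (congrFun hpt 1) 1
    simp [trFst, Fin.sum_univ_two, Matrix.one_apply] at h
    have := congrArg Complex.re h
    simpa using this
  rw [p00] at e0
  rw [p11] at e1
  have ha : (σ 0 0).re ≤ 1/2 := by have := diag (1,0); linarith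
  have hd : (σ 1 1).re ≤ 1/2 := by have := diag (0,1); linarith
  -- trig facts
  have hcs : c * s = Real.sqrt 2 / 4 := by
    have h := Real.sin_two_mul (Real.pi/8)
    have : 2 * (Real.pi/8) = Real.pi/4 := by ring
    rw [this, Real.sin_pi_div_four] at h
    rw [hc, hs]; linarith
  have hc2 : c^2 = 1/2 + Real.sqrt 2 / 4 := by
    have h := Real.cos_sq (Real.pi/8)
    have h2 : 2 * (Real.pi/8) = Real.pi/4 := by ring
    rw [h2, Real.cos_pi_div_four] at h
    rw [hc]; rw [Real.cos_sq'] at *; nlinarith [h]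
  have hs2 : s^2 = 1/2 - Real.sqrt 2 / 4 := by
    have h : s^2 = 1 - c^2 := by
      rw [hc, hs]; nlinarith [Real.sin_sq_add_cos_sq (Real.pi/8)]
    rw [h, hc2]; ring
  have hsqrt : (0:ℝ) ≤ Real.sqrt 2 := Real.sqrt_nonneg 2
  have h2 : Real.sqrt 2 ≤ 2 := by
    nlinarith [Real.sq_sqrt (show (0:ℝ) ≤ 2 by norm_num)]
  rw [key]
  nlinarith [diag (0,0), diag (1,1),
    mul_nonneg hsqrt (sub_nonneg.mpr cross),
    mul_nonneg hsqrt (sub_nonneg.mpr ha),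
    mul_nonneg hsqrt (sub_nonneg.mpr hd)]


end
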